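/- Define Ftilde(x) = sum over i from 0 to infinity of (1/2^i) * Zigzag(2^i * x) for real x. Then for every positive natural number n and every natural number k with n <= 2^k, Ftilde(n/2^k) = sum over i from 1 to k of 2^(i-k) * Zigzag(n/2^i); in particular the infinite series reduces to a finite sum. -/

import Mathlib

noncomputable def Zigzag (x : ℝ) : ℝ := min (x - ⌊x⌋) (⌈x⌉ - x)

noncomputable def Ftilde (x : ℝ) : ℝ := ∑' i : ℕ, (1 / 2 ^ i) * Zigzag (2 ^ i * x)

lemma Zigzag_natCast (m : ℕ) : Zigzag (m : ℝ) = 0 := by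
  simp [Zigzag]

theorem Ftilde_eq_finite_sum (n k : ℕ) (hn : 0 < n) (hnk : n ≤ 2 ^ k) :
    Ftilde ((n : ℝ) / 2 ^ k)
      = ∑ i ∈ Finset.Icc 1 k, (2 : ℝ) ^ ((i : ℤ) - k) * Zigzag ((n : ℝ) / 2 ^ i) := by
  have h2 : (2 : ℝ) ≠ 0 := by norm_num
  have hmain : Ftilde ((n : ℝ) / 2 ^ k)
      = ∑ i ∈ Finset.range k, (1 / 2 ^ i) * Zigzag (2 ^ i * ((n : ℝ) / 2 ^ k)) := by
    apply tsum_eq_sum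
    intro i hi
    have hki : k ≤ i := by simpa using hi
    have : (2 : ℝ) ^ i * ((n : ℝ) / 2 ^ k) = ((n * 2 ^ (i - k) : ℕ) : ℝ) := by
      push_cast
      rw [pow_sub₀ (2 : ℝ) h2 hki]
      field_simp
    rw [this, Zigzag_natCast, mul_zero]
  rw [hmain]
  apply Finset.sum_nbij' (fun i => k - i) (fun j => k - j)
  · intro i hi
    simp only [Finset.mem_range] at hi
    simp only [Finset.mem_Icc]
    omega
  · intro j hj
    simp only [Finset.mem_Icc] at hj
    simp only [Finset.mem_range]
    omega
  · intro i hi; simp only [Finset.mem_range] at hi; omega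
  · intro j hj; simp only [Finset.mem_Icc] at hj; omega
  · intro i hi
    simp only [Finset.mem_range] at hi
    have hik : i ≤ k := le_of_lt hi
    have h1 : (2 : ℝ) ^ ((((k - i : ℕ)) : ℤ) - k) = 1 / 2 ^ i := by
      have : (((k - i : ℕ)) : ℤ) - k = -(i : ℤ) := by omega
      rw [this, zpow_neg, zpow_natCast]
      ring
    have h2' : (n : ℝ) / 2 ^ (k - i) = 2 ^ i * ((n : ℝ) / 2 ^ k) := by
      have hpow : (2 : ℝ) ^ i * 2 ^ (k - i) = 2 ^ k := by
        rw [← pow_add]; congr 1; omega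
      field_simp
      rw [← hpow]; ring
    rw [h1, h2']
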